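/- If the slender tree property SP(ω₁, ω₂, ω₂) holds (every ω₁-slender (ω₂,ω₂)-list has a cofinal branch), then there are no weak ω₁-Kurepa trees, i.e., the weak Kurepa Hypothesis at ω₁ fails. -/

import Mathlib

universe u v

/-- `C` is a closed unbounded subset of `P_κ(B)`, the subsets of `B` of size `< κ`. -/
def IsClubIn {β : Type v} (κ : Cardinal.{v}) (B : Set β) (C : Set (Set β)) : Prop :=
  (∀ A ∈ C, A ⊆ B ∧ Cardinal.mk ↥A < κ) ∧
  (∀ A : Set β, A ⊆ B → Cardinal.mk ↥A < κ → ∃ D ∈ C, A ⊆ D) ∧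
  (∀ D : Set (Set β), D ⊆ C → D.Nonempty → IsChain (· ⊆ ·) D →
    Cardinal.mk ↥D < κ → ⋃₀ D ∈ C)

/-- A `(κ,λ)`-list is *`μ`-slender* if (for all sufficiently large `θ`) there is a club of
models `M ∈ P_κ(H(θ))` such that for all `y ∈ M ∩ P_μ(λ)` we have `d (M ∩ λ) ∩ y ∈ M`.
Here the relevant part of `H(θ)` is modelled by `λ ⊕ P(λ)`: a model `M` is a small set of
ordinals `< λ` (left summands) and of subsets of `λ` (right summands); `M ∩ λ` is the set
of left summands of `M`. -/
def IsSlenderList (μ κ : Cardinal.{0}) (lam : Ordinal.{0})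
    (d : Set lam.ToType → Set lam.ToType) : Prop :=
  ∃ C : Set (Set (lam.ToType ⊕ Set lam.ToType)), IsClubIn κ Set.univ C ∧
    ∀ M ∈ C, ∀ y : Set lam.ToType, Sum.inr y ∈ M → Cardinal.mk ↥y < μ →
      Sum.inr (d {o : lam.ToType | Sum.inl o ∈ M} ∩ y) ∈ M

/-- `b` is a cofinal branch of the `(κ,λ)`-list `d`: for every `x ∈ P_κ(λ)` there is
`z ⊇ x` in `P_κ(λ)` with `b ∩ x = d z ∩ x`. -/
def IsCofBranch (κ : Cardinal.{0}) (lam : Ordinal.{0})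
    (d : Set lam.ToType → Set lam.ToType) (b : Set lam.ToType) : Prop :=
  ∀ x : Set lam.ToType, Cardinal.mk ↥x < κ →
    ∃ z : Set lam.ToType, Cardinal.mk ↥z < κ ∧ x ⊆ z ∧ b ∩ x = d z ∩ x

/-- In a partial order in which the predecessors of every element are well-ordered
(i.e. a tree), the rank (level) of an element is the order type of its set of
predecessors. -/
noncomputable def treeRank {α : Type u} [PartialOrder α]
    (hwo : ∀ x : α, IsWellOrder {y : α // y < x} (· < ·)) (x : α) : Ordinal.{u} :=
  @Ordinal.type {y : α // y < x} (· < ·) (hwo x)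

section Aux
open Cardinal
variable {α : Type u} [PartialOrder α]
  (hwo : ∀ x : α, IsWellOrder {y : α // y < x} (· < ·))

theorem treeRank_lt_of_lt {a b : α} (h : a < b) :
    treeRank hwo a < treeRank hwo b := by
  haveI := hwo a; haveI := hwo b
  have f : @PrincipalSeg {y : α // y < a} {y : α // y < b} (· < ·) (· < ·) := by
    refine ⟨⟨⟨fun y => ⟨y.1, y.2.trans h⟩, ?_⟩, ?_⟩, ⟨a, h⟩, ?_⟩
    · intro x y hxy
      simpa [Subtype.ext_iff] using hxy
    · intro x y
      exact Iff.rfl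
    · intro c
      constructor
      · rintro ⟨x, rfl⟩
        exact Subtype.mk_lt_mk.mpr x.2
      · intro hc
        exact ⟨⟨c.1, Subtype.mk_lt_mk.mp hc⟩, Subtype.ext rfl⟩
  exact f.ordinal_type_lt

theorem le_of_comparable_of_rank_le {a b : α} (hcomp : a ≤ b ∨ b ≤ a)
    (hr : treeRank hwo a ≤ treeRank hwo b) : a ≤ b := by
  rcases hcomp with h | h
  · exact h
  · rcases h.lt_or_eq with h' | rfl
    · exact absurd (treeRank_lt_of_lt hwo h') (not_lt.mpr hr)
    · exact le_rfl

theorem mem_branch_of_le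
    (hrank : ∀ x : α, treeRank hwo x < (Cardinal.aleph 1).ord)
    {C : Set α} (hchain : IsChain (· ≤ ·) C)
    (hfull : ∀ β < (Cardinal.aleph 1).ord, ∃ x ∈ C, treeRank hwo x = β)
    {t a : α} (ht : t ∈ C) (hle : a ≤ t) : a ∈ C := by
  obtain ⟨c, hc, hcr⟩ := hfull (treeRank hwo a) (hrank a)
  suffices h : a = c by rwa [h]
  rcases hle.lt_or_eq with hat | rfl
  · have hct : c < t := by
      have hne : c ≠ t := by
        rintro rfl
        exact absurd (treeRank_lt_of_lt hwo hat) (by rw [hcr]; exact lt_irrefl _)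
      have hcomp := hchain hc ht hne
      have hle2 : c ≤ t := le_of_comparable_of_rank_le hwo hcomp
        (by rw [hcr]; exact (treeRank_lt_of_lt hwo hat).le)
      exact hle2.lt_of_ne hne
    rcases @trichotomous _ (· < ·) (hwo t).toTrichotomous ⟨a, hat⟩ ⟨c, hct⟩ with h | h | h
    · exact absurd (treeRank_lt_of_lt hwo (Subtype.mk_lt_mk.mp h)) (by rw [hcr]; exact lt_irrefl _)
    · exact congrArg Subtype.val h
    · exact absurd (treeRank_lt_of_lt hwo (Subtype.mk_lt_mk.mp h)) (by rw [hcr]; exact lt_irrefl _)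
  · rcases eq_or_ne c a with h | hne
    · exact h.symm
    · exfalso
      rcases hchain hc ht hne with h | h
      · rcases h.lt_or_eq with h' | h'
        · exact absurd (treeRank_lt_of_lt hwo h') (by rw [hcr]; exact lt_irrefl _)
        · exact hne h'
      · rcases h.lt_or_eq with h' | h'
        · exact absurd (treeRank_lt_of_lt hwo h') (by rw [hcr]; exact lt_irrefl _)
        · exact hne h'.symm

end Aux

open Cardinal in
theorem exists_closure {σ : Type} (h : σ → Set σ) {c : Cardinal.{0}}
    (hc : ℵ₀ ≤ c) (hh : ∀ a, #↥(h a) ≤ c) (A : Set σ) (hA : #↥A ≤ c) :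
    ∃ M : Set σ, A ⊆ M ∧ #↥M ≤ c ∧ ∀ a ∈ M, h a ⊆ M := by
  let f : ℕ → Set σ := fun n => Nat.rec A (fun _ Mn => Mn ∪ ⋃ a : Mn, h a.1) n
  have hstep : ∀ n, f (n + 1) = f n ∪ ⋃ a : f n, h a.1 := fun n => rfl
  have hcard : ∀ n, #↥(f n) ≤ c := by
    intro n
    induction n with
    | zero => exact hA
    | succ n ih =>
      rw [hstep]
      refine (Cardinal.mk_union_le _ _).trans ?_
      have h2 : #↥(⋃ a : f n, h a.1) ≤ c := by
        rcases isEmpty_or_nonempty ↥(f n) with he | hne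
        · rw [@Set.iUnion_of_empty _ _ he (fun a : ↥(f n) => h a.1)]
          simpa using zero_le c
        · refine (Cardinal.mk_iUnion_le _).trans ?_
          refine (mul_le_mul' ih (ciSup_le' fun a => hh _)).trans ?_
          rw [Cardinal.mul_eq_self hc]
      calc #↥(f n) + #↥(⋃ a : f n, h a.1) ≤ c + c := add_le_add ih h2
        _ = c := Cardinal.add_eq_self hc
  refine ⟨⋃ n, f n, ?_, ?_, ?_⟩
  · exact Set.subset_iUnion f 0
  · refine (Cardinal.mk_iUnion_le _).trans ?_
    rw [Cardinal.mk_nat]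
    refine (mul_le_mul' le_rfl (ciSup_le' hcard)).trans ?_
    rw [Cardinal.mul_eq_max le_rfl hc]
    exact max_le hc le_rfl
  · rintro a ha b hb
    obtain ⟨n, hn⟩ := Set.mem_iUnion.mp ha
    refine Set.mem_iUnion.mpr ⟨n + 1, ?_⟩
    rw [hstep]
    exact Set.mem_union_right _ (Set.mem_iUnion.mpr ⟨⟨a, hn⟩, hb⟩)


open Cardinal

/-- If the slender tree property `SP(ω₁, ω₂, ω₂)` holds — every
`ω₁`-slender `(ω₂,ω₂)`-list has a cofinal branch — then the weak Kurepa Hypothesis at `ω₁`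
fails: there is no tree of height `ω₁` and size `≤ ω₁` with at least `ω₂`-many cofinal
branches. -/
theorem SP_implies_no_weak_Kurepa_tree
    (hSP : ∀ d : Set (Cardinal.aleph 2).ord.ToType → Set (Cardinal.aleph 2).ord.ToType,
      (∀ x, d x ⊆ x) →
      IsSlenderList (Cardinal.aleph 1) (Cardinal.aleph 2) (Cardinal.aleph 2).ord d →
      ∃ b, IsCofBranch (Cardinal.aleph 2) (Cardinal.aleph 2).ord d b) :
    ∀ (α : Type u) [inst : PartialOrder α]
      (hwo : ∀ x : α, IsWellOrder {y : α // y < x} (· < ·)),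
      (∀ x : α, treeRank hwo x < (Cardinal.aleph 1).ord) →
      (∀ β < (Cardinal.aleph 1).ord, ∃ x : α, treeRank hwo x = β) →
      Cardinal.mk α ≤ Cardinal.aleph 1 →
      Cardinal.mk {C : Set α // IsChain (· ≤ ·) C ∧
        ∀ β < (Cardinal.aleph 1).ord, ∃ x ∈ C, treeRank hwo x = β} < Cardinal.aleph 2 := by
  intro α inst hwo hrank _hlevels hsize
  by_contra hbig
  rw [not_lt] at hbig
  classical
  set S := {C : Set α // IsChain (· ≤ ·) C ∧
      ∀ β < (Cardinal.aleph 1).ord, ∃ x ∈ C, treeRank hwo x = β} with hS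
  set lamT := (Cardinal.aleph.{0} 2).ord.ToType with hlamT
  have hmkT : #lamT = Cardinal.aleph.{0} 2 := Cardinal.mk_ord_toType _
  have hl2 : Cardinal.lift.{u} (Cardinal.aleph.{0} 2) = Cardinal.aleph.{u} 2 := by
    rw [Cardinal.lift_aleph]; norm_num
  have hl1 : Cardinal.lift.{u} (Cardinal.aleph.{0} 1) = Cardinal.aleph.{u} 1 := by
    rw [Cardinal.lift_aleph]; norm_num
  have hmkU : #(ULift.{u} lamT) = Cardinal.aleph.{u} 2 := by
    rw [Cardinal.mk_uLift, hmkT, hl2]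
  -- embedding of the tree into lamT
  obtain ⟨e0⟩ : Nonempty (α ↪ ULift.{u} lamT) := by
    rw [← Cardinal.le_def, hmkU]
    exact hsize.trans (Cardinal.aleph_le_aleph.mpr one_le_two)
  let e : α ↪ lamT := e0.trans Equiv.ulift.toEmbedding
  -- embedding of lamT into the branches
  obtain ⟨emb⟩ : Nonempty (ULift.{u, 0} lamT ↪ S) := by
    rw [← Cardinal.le_def, hmkU]
    exact hbig
  let Br : lamT → Set α := fun β => (emb ⟨β⟩).1
  have hchainBr : ∀ β, IsChain (· ≤ ·) (Br β) := fun β => (emb ⟨β⟩).2.1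
  have hfullBr : ∀ β, ∀ γ < (Cardinal.aleph 1).ord, ∃ t ∈ Br β, treeRank hwo t = γ :=
    fun β => (emb ⟨β⟩).2.2
  have hBr_inj : Function.Injective Br := by
    intro a b hab
    have h2 : (⟨a⟩ : ULift.{u, 0} lamT) = ⟨b⟩ := emb.injective (Subtype.ext hab)
    exact congrArg ULift.down h2
  let F : lamT → Set lamT := fun β => e '' Br β
  have hF_inj : Function.Injective F :=
    fun a b hab => hBr_inj ((Set.image_injective.mpr e.injective) hab)
  set X₀ : Set lamT := Set.range e with hX₀def
  have hFX₀ : ∀ β, F β ⊆ X₀ := fun β => Set.image_subset_range _ _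
  -- cardinality of X₀ and T0
  have hrange_le : ∀ {τ : Type} (g : α → τ), #↥(Set.range g) ≤ Cardinal.aleph.{0} 1 := by
    intro τ g
    have h1 : Cardinal.lift.{u} #↥(Set.range g) ≤ Cardinal.lift.{0} #α :=
      Cardinal.mk_range_le_lift
    rw [Cardinal.lift_uzero] at h1
    have h2 := h1.trans (hsize.trans le_rfl)
    rw [← hl1] at h2
    exact Cardinal.lift_le.mp h2
  have hX₀card : #↥X₀ ≤ Cardinal.aleph.{0} 1 := hrange_le _
  set T0 : Set (Set lamT) := Set.range (fun t : α => e '' {v : α | v ≤ t}) with hT0def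
  have hT0card : #↥T0 ≤ Cardinal.aleph.{0} 1 := hrange_le _
  -- basic cardinal facts
  have hsucc : Cardinal.aleph.{0} 2 = Order.succ (Cardinal.aleph.{0} 1) := by
    rw [show (2 : Ordinal) = Order.succ 1 by
      rw [← Ordinal.add_one_eq_succ]; exact one_add_one_eq_two.symm]
    exact Cardinal.aleph_succ 1
  have hlt_of : ∀ c : Cardinal.{0}, c < Cardinal.aleph 2 → c ≤ Cardinal.aleph 1 := by
    intro c hc
    rwa [hsucc, Order.lt_succ_iff] at hc
  have h12 : Cardinal.aleph.{0} 1 < Cardinal.aleph 2 := Cardinal.aleph_lt_aleph.mpr one_lt_two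
  have ha1 : ℵ₀ ≤ Cardinal.aleph.{0} 1 := Cardinal.aleph0_le_aleph 1
  -- the list
  let d : Set lamT → Set lamT := fun x =>
    if h : xᶜ.Nonempty ∧ X₀ ⊆ x then F h.1.some ∩ x else ∅
  have hdef : ∀ (x : Set lamT) (h : xᶜ.Nonempty ∧ X₀ ⊆ x), d x = F h.1.some ∩ x :=
    fun x h => dif_pos h
  have hdsub : ∀ x, d x ⊆ x := by
    intro x
    by_cases h : xᶜ.Nonempty ∧ X₀ ⊆ x
    · rw [hdef x h]; exact Set.inter_subset_right
    · show dite _ _ _ ⊆ x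
      rw [dif_neg h]; exact Set.empty_subset x
  have hcompl : ∀ x : Set lamT, #↥x < Cardinal.aleph.{0} 2 → xᶜ.Nonempty := by
    intro x hx
    rw [Set.nonempty_compl]
    rintro rfl
    rw [Cardinal.mk_univ, hmkT] at hx
    exact lt_irrefl _ hx
  -- slenderness
  have hslender : IsSlenderList (Cardinal.aleph 1) (Cardinal.aleph 2) (Cardinal.aleph 2).ord d := by
    refine ⟨{M | #↥M < Cardinal.aleph 2 ∧ (∀ w ∈ X₀, Sum.inl w ∈ M) ∧
        ∀ y : Set lamT, Sum.inr y ∈ M → ∀ q ∈ T0, Sum.inr (q ∩ y) ∈ M},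
      ⟨?_, ?_, ?_⟩, ?_⟩
    · exact fun A hA => ⟨Set.subset_univ _, hA.1⟩
    · -- unbounded
      intro A _ hA
      let hcl : (lamT ⊕ Set lamT) → Set (lamT ⊕ Set lamT) := fun m =>
        Sum.rec (fun _ => (∅ : Set (lamT ⊕ Set lamT)))
          (fun y => (fun q : Set lamT => Sum.inr (q ∩ y)) '' T0) m
      have hhc : ∀ m, #↥(hcl m) ≤ Cardinal.aleph.{0} 1 := by
        rintro (w | y)
        · show #↥(∅ : Set (lamT ⊕ Set lamT)) ≤ _
          simpa using zero_le _
        · exact (Cardinal.mk_image_le).trans hT0card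
      have hA1 : #↥(A ∪ Sum.inl '' X₀ : Set (lamT ⊕ Set lamT)) ≤ Cardinal.aleph.{0} 1 := by
        refine (Cardinal.mk_union_le _ _).trans ?_
        have h1 := hlt_of _ hA
        have h2 : #↥(Sum.inl '' X₀ : Set (lamT ⊕ Set lamT)) ≤ Cardinal.aleph.{0} 1 :=
          (Cardinal.mk_image_le).trans hX₀card
        calc #↥A + #↥(Sum.inl '' X₀ : Set (lamT ⊕ Set lamT))
            ≤ Cardinal.aleph 1 + Cardinal.aleph 1 := add_le_add h1 h2
          _ = Cardinal.aleph 1 := Cardinal.add_eq_self ha1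
      obtain ⟨M, hAM, hMcard, hMcl⟩ := exists_closure hcl ha1 hhc _ hA1
      refine ⟨M, ⟨hMcard.trans_lt h12, ?_, ?_⟩, Set.subset_union_left.trans hAM⟩
      · intro w hw
        exact hAM (Set.mem_union_right _ ⟨w, hw, rfl⟩)
      · intro y hy q hq
        exact hMcl _ hy ⟨q, hq, rfl⟩
    · -- closed under chains
      intro D hD hDne hDchain hDcard
      refine ⟨?_, ?_, ?_⟩
      · refine lt_of_le_of_lt ((Cardinal.mk_sUnion_le _).trans ?_) h12
        have h1 : #↥D ≤ Cardinal.aleph.{0} 1 := hlt_of _ hDcard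
        haveI : Nonempty ↥D := hDne.to_subtype
        have h2 : (⨆ s : D, #↥(s.1)) ≤ Cardinal.aleph.{0} 1 :=
          ciSup_le' fun s => hlt_of _ (hD s.2).1
        calc #↥D * ⨆ s : D, #↥(s.1) ≤ Cardinal.aleph 1 * Cardinal.aleph 1 :=
            mul_le_mul' h1 h2
          _ = Cardinal.aleph 1 := Cardinal.mul_eq_self ha1
      · intro w hw
        obtain ⟨M, hM⟩ := hDne
        exact Set.mem_sUnion.mpr ⟨M, hM, (hD hM).2.1 w hw⟩
      · intro y hy q hq
        obtain ⟨M, hMD, hyM⟩ := hy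
        exact Set.mem_sUnion.mpr ⟨M, hMD, (hD hMD).2.2 y hyM q hq⟩
    · -- the slender condition
      intro M hM y hy hycard
      have hXM : X₀ ⊆ {o : lamT | Sum.inl o ∈ M} := fun w hw => hM.2.1 w hw
      have hMlcard : #↥{o : lamT | Sum.inl o ∈ M} < Cardinal.aleph.{0} 2 := by
        refine lt_of_le_of_lt ?_ hM.1
        exact Cardinal.mk_le_of_injective
          (f := fun o : {o : lamT | Sum.inl o ∈ M} => (⟨Sum.inl o.1, o.2⟩ : ↥M))
          (fun a b hab => by
            apply Subtype.ext
            exact Sum.inl.inj (congrArg Subtype.val hab))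
      have hcond : ({o : lamT | Sum.inl o ∈ M})ᶜ.Nonempty ∧ X₀ ⊆ {o : lamT | Sum.inl o ∈ M} :=
        ⟨hcompl _ hMlcard, hXM⟩
      have hd : d {o : lamT | Sum.inl o ∈ M} = F hcond.1.some ∩ {o : lamT | Sum.inl o ∈ M} :=
        hdef _ hcond
      set β := hcond.1.some with hβdef
      -- find the node t
      have hι : #{u : α // e u ∈ y} < Cardinal.aleph.{u} 1 := by
        have h1 : #{u : α // e u ∈ y} ≤ Cardinal.lift.{u} #↥y := by
          have h0 := Cardinal.mk_le_of_injective
            (f := fun u : {u : α // e u ∈ y} => (ULift.up (⟨e u.1, u.2⟩ : ↥y) : ULift.{u} ↥y))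
            (fun a b hab => by
              apply Subtype.ext
              apply e.injective
              have := congrArg (fun z : ULift.{u} ↥y => (z.down : lamT)) hab
              exact this)
          rwa [Cardinal.mk_uLift] at h0
        have h2 : Cardinal.lift.{u} #↥y < Cardinal.lift.{u} (Cardinal.aleph.{0} 1) :=
          Cardinal.lift_lt.mpr hycard
        rw [hl1] at h2
        exact h1.trans_lt h2
      have hγ : (⨆ u : {u : α // e u ∈ y}, treeRank hwo u.1) < (Cardinal.aleph.{u} 1).ord := by
        refine Ordinal.iSup_lt_ord ?_ (fun u : {u : α // e u ∈ y} => hrank u.1)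
        rwa [Cardinal.isRegular_aleph_one.cof_eq]
      obtain ⟨t, htB, htr⟩ := hfullBr β _ hγ
      have hkey : F β ∩ y = (e '' {v : α | v ≤ t}) ∩ y := by
        ext w
        constructor
        · rintro ⟨⟨u, huB, rfl⟩, hwy⟩
          refine ⟨⟨u, ?_, rfl⟩, hwy⟩
          have hur : treeRank hwo u ≤ ⨆ u : {u : α // e u ∈ y}, treeRank hwo u.1 :=
            Ordinal.le_iSup _ (⟨u, hwy⟩ : {u : α // e u ∈ y})
          rw [← htr] at hur
          rcases eq_or_ne u t with rfl | hne'
          · exact le_rfl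
          · exact le_of_comparable_of_rank_le hwo (hchainBr β huB htB hne') hur
        · rintro ⟨⟨u, hut, rfl⟩, hwy⟩
          exact ⟨⟨u, mem_branch_of_le hwo hrank (hchainBr β) (hfullBr β) htB hut, rfl⟩, hwy⟩
      have hdy : d {o : lamT | Sum.inl o ∈ M} ∩ y = (e '' {v : α | v ≤ t}) ∩ y := by
        rw [hd, Set.inter_eq_left.mpr ((hFX₀ β).trans hXM), hkey]
      rw [hdy]
      exact hM.2.2 y hy _ ⟨t, rfl⟩
  -- now use the branch to derive a contradiction
  obtain ⟨b, hb⟩ := hSP d hdsub hslender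
  obtain ⟨z₁, hz₁c, hz₁s, heq₁⟩ := hb X₀ (hX₀card.trans_lt h12)
  have hc₁ : z₁ᶜ.Nonempty ∧ X₀ ⊆ z₁ := ⟨hcompl _ hz₁c, hz₁s⟩
  have hd₁ : d z₁ = F hc₁.1.some ∩ z₁ := hdef _ hc₁
  set β₁ := hc₁.1.some with hβ₁def
  have hβ₁n : β₁ ∉ z₁ := hc₁.1.some_mem
  have hbX : b ∩ X₀ = F β₁ := by
    rw [heq₁, hd₁, Set.inter_eq_left.mpr ((hFX₀ β₁).trans hz₁s)]
    exact Set.inter_eq_left.mpr (hFX₀ β₁)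
  have hx₁c : #↥(insert β₁ z₁ : Set lamT) < Cardinal.aleph.{0} 2 := by
    refine (Cardinal.mk_insert_le).trans_lt ?_
    exact Cardinal.add_lt_of_lt (Cardinal.aleph0_le_aleph 2) hz₁c
      (Cardinal.one_lt_aleph0.trans_le (Cardinal.aleph0_le_aleph 2))
  obtain ⟨z₂, hz₂c, hz₂s, heq₂⟩ := hb (insert β₁ z₁) hx₁c
  have hXx₁ : X₀ ⊆ insert β₁ z₁ := hz₁s.trans (Set.subset_insert _ _)
  have hc₂ : z₂ᶜ.Nonempty ∧ X₀ ⊆ z₂ := ⟨hcompl _ hz₂c, hXx₁.trans hz₂s⟩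
  have hd₂ : d z₂ = F hc₂.1.some ∩ z₂ := hdef _ hc₂
  set β₂ := hc₂.1.some with hβ₂def
  have hβ₂n : β₂ ∉ z₂ := hc₂.1.some_mem
  have hbX₂ : b ∩ X₀ = F β₂ := by
    calc b ∩ X₀ = (b ∩ insert β₁ z₁) ∩ X₀ := by
          rw [Set.inter_assoc, Set.inter_eq_right.mpr hXx₁]
      _ = (d z₂ ∩ insert β₁ z₁) ∩ X₀ := by rw [heq₂]
      _ = F β₂ := by
          rw [hd₂, Set.inter_eq_left.mpr ((hFX₀ β₂).trans hc₂.2),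
            Set.inter_eq_left.mpr ((hFX₀ β₂).trans hXx₁)]
          exact Set.inter_eq_left.mpr (hFX₀ β₂)
  have hββ : β₁ = β₂ := hF_inj (hbX.symm.trans hbX₂)
  exact hβ₂n (hββ ▸ hz₂s (Set.mem_insert β₁ z₁))
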